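/- Let M be copositive with M = P + N where P is positive semidefinite and N entrywise nonnegative. If x ∈ ℝⁿ₊ satisfies x^T M x = 0, then P x = 0 and the principal submatrices of P and M indexed by the support S of x agree: P[S] = M[S]. -/

import Mathlib

open Matrix

/-- If `M = P + N` with `P ⪰ 0` and `N ≥ 0` entrywise, and `x ≥ 0` is a zero of the
quadratic form `xᵀMx`, then `Px = 0` and `P` and `M` agree on the principal submatrix
indexed by the support of `x`. -/
theorem k0_certificate_kernel {n : ℕ} (M P N : Matrix (Fin n) (Fin n) ℝ)
    (hP : P.PosSemidef) (hN : ∀ i j, 0 ≤ N i j) (hM : M = P + N)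
    (x : Fin n → ℝ) (hx : ∀ i, 0 ≤ x i) (hzero : x ⬝ᵥ M.mulVec x = 0) :
    P.mulVec x = 0 ∧ ∀ i j, 0 < x i → 0 < x j → M i j = P i j := by
  have hPq : 0 ≤ x ⬝ᵥ P.mulVec x := by
    have := hP.dotProduct_mulVec_nonneg x
    simpa using this
  have hNq : 0 ≤ x ⬝ᵥ N.mulVec x := by
    unfold dotProduct mulVec
    refine Finset.sum_nonneg fun i _ => mul_nonneg (hx i) ?_
    exact Finset.sum_nonneg fun j _ => mul_nonneg (hN i j) (hx j)
  have hsplit : x ⬝ᵥ M.mulVec x = x ⬝ᵥ P.mulVec x + x ⬝ᵥ N.mulVec x := by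
    rw [hM, add_mulVec, dotProduct_add]
  have hPz : x ⬝ᵥ P.mulVec x = 0 := by linarith
  have hNz : x ⬝ᵥ N.mulVec x = 0 := by linarith
  have hPx : P.mulVec x = 0 := by
    have := (hP.dotProduct_mulVec_zero_iff x).mp (by simpa using hPz)
    exact this
  refine ⟨hPx, fun i j hi hj => ?_⟩
  -- each term in xᵀNx is nonneg and the sum is 0, so x i * N i j * x j = 0
  have hterm : ∀ i j, x i * (N i j * x j) = 0 := by
    have h1 : ∀ i ∈ Finset.univ, (0:ℝ) ≤ x i * (N *ᵥ x) i := by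
      intro i _
      have : (N *ᵥ x) i = ∑ j, N i j * x j := rfl
      rw [this]
      exact mul_nonneg (hx i)
        (Finset.sum_nonneg fun j _ => mul_nonneg (hN i j) (hx j))
    have h2 : ∀ i ∈ Finset.univ, x i * (N *ᵥ x) i = 0 :=
      (Finset.sum_eq_zero_iff_of_nonneg h1).mp hNz
    intro i j
    have hi0 : x i * (N *ᵥ x) i = 0 := h2 i (Finset.mem_univ i)
    rcases mul_eq_zero.mp hi0 with h | h
    · rw [h, zero_mul]
    · have hrw : (N *ᵥ x) i = ∑ j, N i j * x j := rfl
      rw [hrw] at h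
      have h1' : ∀ j ∈ Finset.univ, (0:ℝ) ≤ N i j * x j :=
        fun j _ => mul_nonneg (hN i j) (hx j)
      have := (Finset.sum_eq_zero_iff_of_nonneg h1').mp h j (Finset.mem_univ j)
      rw [this, mul_zero]
  have hNij : N i j = 0 := by
    have := hterm i j
    rcases mul_eq_zero.mp this with h | h
    · exact absurd h hi.ne'
    · rcases mul_eq_zero.mp h with h' | h'
      · exact h'
      · exact absurd h' hj.ne'
  simp [hM, hNij]
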